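/- Let V be a finite set, s ≥ 1 an integer, 0 < ε < 1, and set ε_A = ε(1−ε)/(14s). Let F : 2^V → ℝ≥0 be monotone nondecreasing and submodular, and let F̂ : 2^V → ℝ≥0 be monotone nondecreasing and satisfy |F̂(S) − F(S)| ≤ ε_A · max{F(S), OPT_1(F)} for every S ⊆ V with |S| ≤ s, where OPT_k(F) := max_{|S| ≤ k} F(S). Let v_1, …, v_s be a greedy sequence for F̂, i.e. for each i ≤ s, v_i maximizes u ↦ F̂({v_1,…,v_{i−1}} ∪ {u}) over u ∈ V ∖ {v_1,…,v_{i−1}}. Then T = {v_1,…,v_s} satisfies F(T) ≥ (1 − (1 − 1/s)^s)·(1 − ε)·OPT_s(F). -/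

import Mathlib

open Finset

/-- Submodularity of a set function. -/
def SubmodularFn {V : Type*} [DecidableEq V] (F : Finset V → ℝ) : Prop :=
  ∀ A B : Finset V, A ⊆ B → ∀ x ∉ B, F (insert x B) - F B ≤ F (insert x A) - F A

/-- Monotone nondecreasing set function. -/
def MonotoneFn {V : Type*} (F : Finset V → ℝ) : Prop :=
  ∀ A B : Finset V, A ⊆ B → F A ≤ F B

/-- `OPTF F k` : the maximum of the set function `F` over subsets of size at most `k`. -/
noncomputable def OPTF {V : Type*} [Fintype V] [DecidableEq V]
    (F : Finset V → ℝ) (k : ℕ) : ℝ :=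
  sSup {x : ℝ | ∃ S : Finset V, S.card ≤ k ∧ x = F S}

lemma OPTF_spec {V : Type*} [Fintype V] [DecidableEq V] (F : Finset V → ℝ) (k : ℕ) :
    ∃ S : Finset V, S.card ≤ k ∧ OPTF F k = F S ∧
      ∀ T : Finset V, T.card ≤ k → F T ≤ OPTF F k := by
  classical
  set A : Finset ℝ := (Finset.univ.filter (fun S : Finset V => S.card ≤ k)).image F with hA
  have hAne : A.Nonempty := ⟨F ∅, Finset.mem_image.mpr ⟨∅, by simp, rfl⟩⟩
  have hset : {x : ℝ | ∃ S : Finset V, S.card ≤ k ∧ x = F S} = ↑A := by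
    ext x; simp [hA, eq_comm]
  have hOPT : OPTF F k = A.max' hAne := by
    rw [OPTF, hset, Finset.Nonempty.csSup_eq_max']
  obtain ⟨S, hS, hFS⟩ := Finset.mem_image.mp (A.max'_mem hAne)
  refine ⟨S, (Finset.mem_filter.mp hS).2, by rw [hOPT, hFS], ?_⟩
  intro T hT
  rw [hOPT]
  exact Finset.le_max' _ _ (Finset.mem_image_of_mem F (by simp [hT]))

lemma submod_sum {V : Type*} [DecidableEq V] {F : Finset V → ℝ}
    (hmono : MonotoneFn F) (hsub : SubmodularFn F) (A B : Finset V) :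
    F (A ∪ B) - F B ≤ ∑ u ∈ A, (F (insert u B) - F B) := by
  classical
  induction A using Finset.induction_on with
  | empty => simp
  | @insert x A hx ih =>
    rw [Finset.sum_insert hx]
    have h1 : F (insert x A ∪ B) - F (A ∪ B) ≤ F (insert x B) - F B := by
      by_cases hxB : x ∈ A ∪ B
      · have hins : insert x A ∪ B = A ∪ B := by
          rw [Finset.insert_union, Finset.insert_eq_self.mpr hxB]
        rw [hins]
        have := hmono B (insert x B) (Finset.subset_insert x B)
        linarith
      · rw [Finset.insert_union]
        exact hsub B (A ∪ B) Finset.subset_union_right x hxB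
    linarith

set_option maxHeartbeats 1000000 in
/-- **Greedy on an approximate oracle.**  If `F̂` is monotone and uniformly
`ε_A`-approximates the monotone submodular `F` with `ε_A = ε(1−ε)/(14s)`, then the
set of the first `s` nodes of a greedy sequence for `F̂` satisfies
`F(T) ≥ (1 − (1 − 1/s)^s)·(1 − ε)·OPT_s(F)`. -/
theorem greedy_approximate_oracle {V : Type*} [Fintype V] [DecidableEq V]
    (s : ℕ) (hs : 1 ≤ s) (ε : ℝ) (hε0 : 0 < ε) (hε1 : ε < 1)
    (F : Finset V → ℝ) (hFnn : ∀ S, 0 ≤ F S)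
    (hFmono : MonotoneFn F) (hFsub : SubmodularFn F)
    (Fhat : Finset V → ℝ) (hFhnn : ∀ S, 0 ≤ Fhat S) (hFhmono : MonotoneFn Fhat)
    (happrox : ∀ S : Finset V, S.card ≤ s →
      |Fhat S - F S| ≤ (ε * (1 - ε) / (14 * (s : ℝ))) * max (F S) (OPTF F 1))
    (v : Fin s → V)
    (hgreedy : ∀ i : Fin s,
      v i ∉ (Finset.Iio i).image v ∧
      ∀ u : V, u ∉ (Finset.Iio i).image v →
        Fhat (insert u ((Finset.Iio i).image v)) ≤
          Fhat (insert (v i) ((Finset.Iio i).image v))) :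
    (1 - (1 - 1 / (s : ℝ)) ^ s) * (1 - ε) * OPTF F s ≤ F (Finset.univ.image v) := by
  classical
  have hs1 : (1 : ℝ) ≤ (s : ℝ) := by exact_mod_cast hs
  have hs0 : (0 : ℝ) < (s : ℝ) := by linarith
  set εA : ℝ := ε * (1 - ε) / (14 * (s : ℝ)) with hεA
  have hεAnn : 0 ≤ εA := by
    apply div_nonneg
    · nlinarith
    · nlinarith
  obtain ⟨Sstar, hScard, hSopt, hOPTmax⟩ := OPTF_spec F s
  set OPT : ℝ := OPTF F s with hOPTdef
  have hOPTnn : 0 ≤ OPT := le_trans (hFnn ∅) (hOPTmax ∅ (by simp))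
  have hOPT1le : OPTF F 1 ≤ OPT := by
    obtain ⟨S1, hS1card, hS1, _⟩ := OPTF_spec F 1
    rw [hS1]
    exact hOPTmax S1 (le_trans hS1card hs)
  -- uniform error bound
  have herr : ∀ S : Finset V, S.card ≤ s → |Fhat S - F S| ≤ εA * OPT := by
    intro S hS
    refine le_trans (happrox S hS) ?_
    apply mul_le_mul_of_nonneg_left _ hεAnn
    exact max_le (hOPTmax S hS) hOPT1le
  -- the greedy chain
  set T : ℕ → Finset V := fun n =>
    (Finset.univ.filter (fun j : Fin s => (j : ℕ) < n)).image v with hT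
  have hTcard : ∀ n, (T n).card ≤ n := by
    intro n
    refine le_trans (Finset.card_image_le) ?_
    have : (Finset.univ.filter (fun j : Fin s => (j : ℕ) < n)).card ≤
        (Finset.range n).card := by
      apply Finset.card_le_card_of_injOn (fun j : Fin s => (j : ℕ))
      · intro a ha; simp only [Finset.mem_coe, Finset.mem_filter] at ha; simp [ha.2]
      · intro a _ b _ h; exact Fin.ext h
    simpa using this
  have hTIio : ∀ i : Fin s, (Finset.Iio i).image v = T (i : ℕ) := by
    intro i
    simp only [hT]
    congr 1
    ext j
    simp only [Finset.mem_Iio, Finset.mem_filter, Finset.mem_univ, true_and, Fin.lt_def]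
  have hTsucc : ∀ i : Fin s, T ((i : ℕ) + 1) = insert (v i) (T (i : ℕ)) := by
    intro i
    ext x
    simp only [hT, Finset.mem_image, Finset.mem_filter, Finset.mem_univ, true_and,
      Finset.mem_insert]
    constructor
    · rintro ⟨j, hj, rfl⟩
      rcases Nat.lt_succ_iff_lt_or_eq.mp hj with h | h
      · exact Or.inr ⟨j, h, rfl⟩
      · exact Or.inl (by rw [Fin.ext h])
    · rintro (rfl | ⟨j, hj, rfl⟩)
      · exact ⟨i, Nat.lt_succ_self _, rfl⟩
      · exact ⟨j, Nat.lt_succ_of_lt hj, rfl⟩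
  have hTuniv : T s = Finset.univ.image v := by
    simp only [hT]
    congr 1
    ext j
    simp only [Finset.mem_filter, Finset.mem_univ, true_and, iff_true]
    exact j.isLt
  have hTmono : ∀ n, T n ⊆ T (n + 1) := by
    intro n x hx
    simp only [hT, Finset.mem_image, Finset.mem_filter, Finset.mem_univ, true_and] at hx ⊢
    obtain ⟨j, hj, rfl⟩ := hx
    exact ⟨j, Nat.lt_succ_of_lt hj, rfl⟩
  -- one greedy step
  have hstep : ∀ i : Fin s,
      OPT - F (T ((i : ℕ) + 1)) ≤ (1 - 1 / (s : ℝ)) * (OPT - F (T (i : ℕ))) +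
        2 * εA * OPT := by
    intro i
    have hci : (T (i : ℕ)).card ≤ s := le_trans (hTcard _) (le_of_lt i.isLt)
    have hci1 : ∀ u : V, (insert u (T (i : ℕ))).card ≤ s := by
      intro u
      refine le_trans (Finset.card_insert_le _ _) ?_
      exact le_trans (Nat.add_le_add_right (hTcard _) 1) i.isLt
    -- exists good element
    have hgain : ∃ u : V, (F Sstar - F (T (i : ℕ))) / (s : ℝ) ≤
        F (insert u (T (i : ℕ))) - F (T (i : ℕ)) := by
      by_cases hle : F Sstar ≤ F (T (i : ℕ))
      · have h0 : (F Sstar - F (T (i : ℕ))) / (s : ℝ) ≤ 0 :=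
          div_nonpos_of_nonpos_of_nonneg (by linarith) (le_of_lt hs0)
        have h1 : (0:ℝ) ≤ F (insert (v i) (T (i : ℕ))) - F (T (i : ℕ)) := by
          have := hFmono (T (i : ℕ)) (insert (v i) (T (i : ℕ))) (Finset.subset_insert _ _)
          linarith
        exact ⟨v i, le_trans h0 h1⟩
      · push_neg at hle
        have hne : Sstar.Nonempty := by
          rcases Finset.eq_empty_or_nonempty Sstar with h | h
          · exfalso
            have := hFmono ∅ (T (i : ℕ)) (Finset.empty_subset _)
            rw [h] at hle
            linarith
          · exact h
        have hsum : F Sstar - F (T (i : ℕ)) ≤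
            ∑ u ∈ Sstar, (F (insert u (T (i : ℕ))) - F (T (i : ℕ))) := by
          have h1 : F Sstar ≤ F (Sstar ∪ T (i : ℕ)) :=
            hFmono _ _ Finset.subset_union_left
          have h2 := submod_sum hFmono hFsub Sstar (T (i : ℕ))
          linarith
        have hconst : ∑ _u ∈ Sstar, ((F Sstar - F (T (i : ℕ))) / (s : ℝ)) ≤
            ∑ u ∈ Sstar, (F (insert u (T (i : ℕ))) - F (T (i : ℕ))) := by
          rw [Finset.sum_const, nsmul_eq_mul]
          refine le_trans ?_ hsum
          have hcs : (Sstar.card : ℝ) ≤ (s : ℝ) := by exact_mod_cast hScard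
          rw [div_eq_mul_inv]
          have h1 : (Sstar.card : ℝ) * ((F Sstar - F (T (i : ℕ))) * (s : ℝ)⁻¹) ≤
              (s : ℝ) * ((F Sstar - F (T (i : ℕ))) * (s : ℝ)⁻¹) := by
            apply mul_le_mul_of_nonneg_right hcs
            have hd : 0 ≤ F Sstar - F (T (i : ℕ)) := by linarith
            have hinv : (0:ℝ) ≤ ((s:ℝ))⁻¹ := by positivity
            exact mul_nonneg hd hinv
          calc (Sstar.card : ℝ) * ((F Sstar - F (T (i : ℕ))) * (s : ℝ)⁻¹)
              ≤ (s : ℝ) * ((F Sstar - F (T (i : ℕ))) * (s : ℝ)⁻¹) := h1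
            _ = F Sstar - F (T (i : ℕ)) := by field_simp
        obtain ⟨u, _, hu⟩ := Finset.exists_le_of_sum_le hne hconst
        exact ⟨u, hu⟩
    obtain ⟨u, hu⟩ := hgain
    -- error bounds
    have e1 : F (insert u (T (i : ℕ))) - εA * OPT ≤ Fhat (insert u (T (i : ℕ))) := by
      have := herr _ (hci1 u)
      rw [abs_le] at this
      linarith [this.1]
    have e2 : Fhat (insert u (T (i : ℕ))) ≤ Fhat (T ((i : ℕ) + 1)) := by
      by_cases hmem : u ∈ T (i : ℕ)
      · rw [Finset.insert_eq_self.mpr hmem, hTsucc i]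
        exact hFhmono _ _ (Finset.subset_insert _ _)
      · have := (hgreedy i).2 u (by rwa [hTIio i])
        rw [hTIio i] at this
        rw [hTsucc i]
        exact this
    have e3 : Fhat (T ((i : ℕ) + 1)) ≤ F (T ((i : ℕ) + 1)) + εA * OPT := by
      have hc : (T ((i : ℕ) + 1)).card ≤ s := by
        rw [hTsucc i]; exact hci1 (v i)
      have := herr _ hc
      rw [abs_le] at this
      linarith [this.2]
    have key : F (T (i : ℕ)) + (F Sstar - F (T (i : ℕ))) / (s : ℝ) - 2 * εA * OPT ≤
        F (T ((i : ℕ) + 1)) := by linarith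
    rw [← hSopt] at key
    have hexp : (1 - 1 / (s : ℝ)) * (OPT - F (T (i : ℕ))) =
        (OPT - F (T (i : ℕ))) - (OPT - F (T (i : ℕ))) / (s : ℝ) := by
      have hsne : (s : ℝ) ≠ 0 := ne_of_gt hs0
      field_simp
    rw [hexp]
    linarith
  -- iterate
  have hind : ∀ n, n ≤ s → OPT - F (T n) ≤
      (1 - 1 / (s : ℝ)) ^ n * OPT + (n : ℝ) * (2 * εA * OPT) := by
    intro n
    induction n with
    | zero =>
      intro _
      simp only [pow_zero, one_mul, Nat.cast_zero, zero_mul, add_zero]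
      have : (0 : ℝ) ≤ F (T 0) := hFnn _
      linarith
    | succ n ih =>
      intro hn
      have hn' : n < s := hn
      have ihn := ih (le_of_lt hn')
      have hst := hstep ⟨n, hn'⟩
      simp only [Fin.val_mk] at hst
      have hq0 : (0 : ℝ) ≤ 1 - 1 / (s : ℝ) := by
        have : 1 / (s : ℝ) ≤ 1 := by
          rw [div_le_one hs0]; exact hs1
        linarith
      have hq1 : 1 - 1 / (s : ℝ) ≤ 1 := by
        have : 0 < 1 / (s : ℝ) := by positivity
        linarith
      have hcnn : 0 ≤ 2 * εA * OPT := by positivity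
      have h1 : (1 - 1 / (s : ℝ)) * (OPT - F (T n)) ≤
          (1 - 1 / (s : ℝ)) * ((1 - 1 / (s : ℝ)) ^ n * OPT + (n : ℝ) * (2 * εA * OPT)) :=
        mul_le_mul_of_nonneg_left ihn hq0
      have h2 : (1 - 1 / (s : ℝ)) * ((n : ℝ) * (2 * εA * OPT)) ≤
          (n : ℝ) * (2 * εA * OPT) := by
        have hnn : 0 ≤ (n : ℝ) * (2 * εA * OPT) := by positivity
        nlinarith
      have hexpand : (1 - 1 / (s : ℝ)) * ((1 - 1 / (s : ℝ)) ^ n * OPT +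
          (n : ℝ) * (2 * εA * OPT)) = (1 - 1 / (s : ℝ)) ^ (n + 1) * OPT +
          (1 - 1 / (s : ℝ)) * ((n : ℝ) * (2 * εA * OPT)) := by ring
      push_cast
      linarith
  have hfinal := hind s le_rfl
  rw [hTuniv] at hfinal
  -- bound (1-1/s)^s ≤ 1/2
  have hq0 : (0 : ℝ) ≤ 1 - 1 / (s : ℝ) := by
    have : 1 / (s : ℝ) ≤ 1 := by rw [div_le_one hs0]; exact hs1
    linarith
  have hqe : (1 - 1 / (s : ℝ)) ^ s ≤ (1 : ℝ) / 2 := by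
    have h1 : 1 - 1 / (s : ℝ) ≤ Real.exp (-(1 / (s : ℝ))) := by
      have := Real.add_one_le_exp (-(1 / (s : ℝ)))
      linarith
    have h2 : (1 - 1 / (s : ℝ)) ^ s ≤ Real.exp (-(1 / (s : ℝ))) ^ s :=
      pow_le_pow_left₀ hq0 h1 s
    have h3 : Real.exp (-(1 / (s : ℝ))) ^ s = Real.exp (-1) := by
      rw [← Real.exp_nat_mul]
      congr 1
      field_simp
    have h4 : Real.exp (-1) ≤ (1 : ℝ) / 2 := by
      rw [Real.exp_neg]
      rw [inv_le_comm₀ (Real.exp_pos 1) (by norm_num)]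
      nlinarith [Real.exp_one_gt_d9]
    rw [h3] at h2
    linarith
  -- simplify the error term
  have hsimp : (s : ℝ) * (2 * εA * OPT) = ε * (1 - ε) / 7 * OPT := by
    rw [hεA]
    field_simp
    ring
  rw [hsimp] at hfinal
  -- final arithmetic
  set q : ℝ := (1 - 1 / (s : ℝ)) ^ s with hqdef
  have hqnn : 0 ≤ q := pow_nonneg hq0 s
  -- goal : (1 - q) * (1 - ε) * OPT ≤ F (univ.image v)
  have hgoal : (1 - q) * (1 - ε) * OPT ≤ OPT - q * OPT - ε * (1 - ε) / 7 * OPT := by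
    have hkey : ε * (1 - ε) / 7 ≤ ε * (1 - q) := by
      have h1 : (1 - ε) / 7 ≤ 1 - q := by linarith
      calc ε * (1 - ε) / 7 = ε * ((1 - ε) / 7) := by ring
        _ ≤ ε * (1 - q) := mul_le_mul_of_nonneg_left h1 (le_of_lt hε0)
    have hident : OPT - q * OPT - ε * (1 - ε) / 7 * OPT - (1 - q) * (1 - ε) * OPT =
        (ε * (1 - q) - ε * (1 - ε) / 7) * OPT := by ring
    have hnn2 : 0 ≤ (ε * (1 - q) - ε * (1 - ε) / 7) * OPT :=
      mul_nonneg (by linarith) hOPTnn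
    linarith
  linarith
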